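/- Let Ω be a D-set with at least 3 elements in which for any three distinct elements there is a splitting separating them, let A ⊆ Ω be finite, and let c ∈ Ω \ A. Then there exists a splitting of Ω with a sector Σ such that c ∈ Σ and A ∩ Σ = ∅. -/

import Mathlib

/-- A D-relation: 4-ary relation satisfying axioms (D1)-(D4). -/
structure IsDRel {α : Type*} (D : α → α → α → α → Prop) : Prop where
  d1 : ∀ w x y z : α, D w x y z → D x w y z ∧ D y z w x
  d2 : ∀ w x y z : α, D w x y z → ¬ D w y x z
  d3 : ∀ w x y z : α, D w x y z → ∀ v, D v x y z ∨ D w x y v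
  d4 : ∀ w x y z : α, w ≠ y → x ≠ y → D w x y y

/-- A splitting of a subset `S` of a D-set: a partition of `S` into at least two
nonempty sectors satisfying the two splitting conditions. -/
structure IsSplitting {α : Type*} (D : α → α → α → α → Prop) (S : Set α)
    (P : Set (Set α)) : Prop where
  sector_nonempty : ∀ s ∈ P, s.Nonempty
  sector_subset : ∀ s ∈ P, s ⊆ S
  cover : ∀ x ∈ S, ∃ s ∈ P, x ∈ s
  pairwise_disjoint : ∀ s ∈ P, ∀ t ∈ P, s ≠ t → Disjoint s t
  two_sectors : ∃ s ∈ P, ∃ t ∈ P, s ≠ t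
  cond1 : ∀ s ∈ P, ∀ a ∈ s, ∀ b ∈ s, ∀ c ∈ S \ s, ∀ d ∈ S \ s, D a b c d
  cond2 : ∀ s₁ ∈ P, ∀ s₂ ∈ P, ∀ s₃ ∈ P, ∀ s₄ ∈ P,
    s₁ ≠ s₂ → s₁ ≠ s₃ → s₁ ≠ s₄ → s₂ ≠ s₃ → s₂ ≠ s₄ → s₃ ≠ s₄ →
    ∀ a ∈ s₁, ∀ b ∈ s₂, ∀ c ∈ s₃, ∀ d ∈ s₄, ¬ D a b c d

/-- Two sectors of splittings of the whole set are nested, disjoint, or cover. -/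
lemma sector_dichotomy {α : Type*} {D : α → α → α → α → Prop}
    (hD : IsDRel D) {P Q : Set (Set α)} {s t : Set α}
    (hP : IsSplitting D Set.univ P) (hQ : IsSplitting D Set.univ Q)
    (hs : s ∈ P) (ht : t ∈ Q) :
    s ⊆ t ∨ t ⊆ s ∨ s ∩ t = ∅ ∨ s ∪ t = Set.univ := by
  by_contra h
  push_neg at h
  obtain ⟨h1, h2, h3, h4⟩ := h
  obtain ⟨a, has, hat⟩ := Set.not_subset.mp h1
  obtain ⟨b, hbt, hbs⟩ := Set.not_subset.mp h2
  obtain ⟨x, hxs, hxt⟩ := h3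
  obtain ⟨y, hy⟩ := Set.ne_univ_iff_exists_notMem _ |>.mp h4
  have hys : y ∉ s := fun h => hy (Or.inl h)
  have hyt : y ∉ t := fun h => hy (Or.inr h)
  have hD1 : D a x b y :=
    hP.cond1 s hs a has x hxs b ⟨trivial, hbs⟩ y ⟨trivial, hys⟩
  have hD2 : D x b a y :=
    hQ.cond1 t ht x hxt b hbt a ⟨trivial, hat⟩ y ⟨trivial, hyt⟩
  exact hD.d2 x b a y hD2 ((hD.d1 a x b y hD1).1)

/-- In a D-set with at least 3 elements in which any three distinct elements can be
separated by a splitting, every finite set A can be avoided: for c ∉ A there is a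
splitting with a sector containing c and disjoint from A. -/
theorem sector_disjoint_from_finite_set {α : Type*} {D : α → α → α → α → Prop}
    (hD : IsDRel D)
    (hcard : ∃ x y z : α, x ≠ y ∧ x ≠ z ∧ y ≠ z)
    (hsep : ∀ x y z : α, x ≠ y → x ≠ z → y ≠ z →
      ∃ P, IsSplitting D Set.univ P ∧ ∃ s₁ ∈ P, ∃ s₂ ∈ P, ∃ s₃ ∈ P,
        s₁ ≠ s₂ ∧ s₁ ≠ s₃ ∧ s₂ ≠ s₃ ∧ x ∈ s₁ ∧ y ∈ s₂ ∧ z ∈ s₃)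
    (A : Set α) (hA : A.Finite) (c : α) (hc : c ∉ A) :
    ∃ P s, IsSplitting D Set.univ P ∧ s ∈ P ∧ c ∈ s ∧ A ∩ s = ∅ := by
  revert hc
  refine Set.Finite.induction_on (motive := fun A _ => c ∉ A →
      ∃ P s, IsSplitting D Set.univ P ∧ s ∈ P ∧ c ∈ s ∧ A ∩ s = ∅) A hA ?_ ?_
  · intro _
    obtain ⟨x, y, z, hxy, hxz, hyz⟩ := hcard
    obtain ⟨P, hP, _⟩ := hsep x y z hxy hxz hyz
    obtain ⟨s, hs, hcs⟩ := hP.cover c trivial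
    exact ⟨P, s, hP, hs, hcs, Set.empty_inter s⟩
  · rintro a A ha hfin ih hc
    have hc' : c ∉ A := fun h => hc (Set.mem_insert_of_mem a h)
    have hac : a ≠ c := fun h => hc (h ▸ Set.mem_insert a A)
    obtain ⟨P, s, hP, hs, hcs, hAs⟩ := ih hc'
    by_cases has : a ∈ s
    · -- need to shrink: separate a, c and a point outside s
      obtain ⟨u, hu, v, hv, huv⟩ := hP.two_sectors
      have : ∃ t ∈ P, t ≠ s := by
        by_cases hus : u = s
        · exact ⟨v, hv, fun h => huv (hus.trans h.symm)⟩
        · exact ⟨u, hu, hus⟩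
      obtain ⟨t, ht, hts⟩ := this
      obtain ⟨x, hxt⟩ := hP.sector_nonempty t ht
      have hxs : x ∉ s := fun hxs =>
        (hP.pairwise_disjoint t ht s hs hts).ne_of_mem hxt hxs rfl
      have hax : a ≠ x := fun h => hxs (h ▸ has)
      have hcx : c ≠ x := fun h => hxs (h ▸ hcs)
      obtain ⟨Q, hQ, t₁, ht₁, t₂, ht₂, t₃, ht₃, h12, h13, h23, hat₁, hct₂, hxt₃⟩ :=
        hsep a c x hac hax hcx
      have hat₂ : a ∉ t₂ := fun h =>
        (hQ.pairwise_disjoint t₁ ht₁ t₂ ht₂ h12).ne_of_mem hat₁ h rfl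
      have hxt₂ : x ∉ t₂ := fun h =>
        (hQ.pairwise_disjoint t₃ ht₃ t₂ ht₂ (Ne.symm h23)).ne_of_mem hxt₃ h rfl
      have hsub : t₂ ⊆ s := by
        rcases sector_dichotomy hD hP hQ hs ht₂ with h | h | h | h
        · exact absurd (h has) hat₂
        · exact h
        · exact absurd (Set.mem_inter hcs hct₂) (by simp [h])
        · have : x ∈ s ∪ t₂ := h ▸ trivial
          rcases this with h' | h'
          · exact absurd h' hxs
          · exact absurd h' hxt₂
      refine ⟨Q, t₂, hQ, ht₂, hct₂, ?_⟩
      apply Set.eq_empty_iff_forall_notMem.mpr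
      rintro w ⟨hw, hwt₂⟩
      rcases hw with rfl | hw
      · exact hat₂ hwt₂
      · exact Set.eq_empty_iff_forall_notMem.mp hAs w ⟨hw, hsub hwt₂⟩
    · refine ⟨P, s, hP, hs, hcs, ?_⟩
      apply Set.eq_empty_iff_forall_notMem.mpr
      rintro w ⟨hw, hws⟩
      rcases hw with rfl | hw
      · exact has hws
      · exact Set.eq_empty_iff_forall_notMem.mp hAs w ⟨hw, hws⟩
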